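/- An ℵ0-saturated group is amenable if and only if it is uniformly amenable. -/

import Mathlib

open FirstOrder

/-- The first-order language of groups: one constant (the identity), one unary function
symbol (inversion), one binary function symbol (multiplication) and no relation symbols. -/
def GroupLang : FirstOrder.Language where
  Functions := fun n =>
    match n with
    | 0 => Unit
    | 1 => Unit
    | 2 => Unit
    | _ => Empty
  Relations := fun _ => Empty

/-- Every group is a structure for the language of groups in the natural way. -/
instance groupLangStructure (G : Type*) [Group G] : GroupLang.Structure G where
  funMap := fun {n} f x =>
    match n, f, x with
    | 0, _, _ => 1
    | 1, _, x => (x 0)⁻¹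
    | 2, _, x => x 0 * x 1
  RelMap := fun {n} r _ => r.elim

/-- A group is ℵ₀-saturated if every countable set of first-order formulas in one free
variable, with finitely many parameters from the group, which is finitely satisfiable in
the group is realized in the group. -/
def AlephZeroSaturated (G : Type*) [Group G] : Prop :=
  ∀ (k : ℕ) (c : Fin k → G) (p : ℕ → GroupLang.Formula (Fin k ⊕ Fin 1)),
    (∀ s : Finset ℕ, ∃ g : G, ∀ n ∈ s, (p n).Realize (Sum.elim c fun _ => g)) →
    ∃ g : G, ∀ n : ℕ, (p n).Realize (Sum.elim c fun _ => g)

/-- A group is amenable if it carries a finitely additive left-invariant probability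
measure defined on all subsets. -/
def Amenable (G : Type*) [Group G] : Prop :=
  ∃ μ : Set G → ℝ, (∀ X, 0 ≤ μ X) ∧ μ Set.univ = 1 ∧
    (∀ X Y, Disjoint X Y → μ (X ∪ Y) = μ X + μ Y) ∧
    (∀ (g : G) (X : Set G), μ ((g * ·) '' X) = μ X)

open scoped Pointwise in
/-- A group is uniformly amenable if there is a function `α` bounding the size of Følner
sets: for every finite subset `A` and every `ε ∈ (0,1]` there is a finite subset `V` with
`|V| ≤ α ε |A|` and `|A * V| < (1 + ε) * |V|`. -/
def UniformlyAmenable (G : Type*) [Group G] : Prop :=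
  ∃ α : ℝ → ℕ → ℕ, ∀ (A : Finset G) (ε : ℝ), 0 < ε → ε ≤ 1 →
    ∃ V : Finset G, V.card ≤ α ε A.card ∧
      (((A : Set G) * (V : Set G)).ncard : ℝ) < (1 + ε) * V.card


section FinsetConn
open FirstOrder.Language

/-- Conjunction of formulas indexed by a finset. -/
noncomputable def finsetIInf {L : FirstOrder.Language} {α β : Type*} {n : ℕ} (s : Finset β)
    (f : β → L.BoundedFormula α n) : L.BoundedFormula α n :=
  BoundedFormula.iInf (fun b : s => f b)

/-- Disjunction of formulas indexed by a finset. -/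
noncomputable def finsetISup {L : FirstOrder.Language} {α β : Type*} {n : ℕ} (s : Finset β)
    (f : β → L.BoundedFormula α n) : L.BoundedFormula α n :=
  BoundedFormula.iSup (fun b : s => f b)

lemma realize_finsetIInf {L : FirstOrder.Language} {M : Type*} [L.Structure M] {α β : Type*}
    {n : ℕ} {s : Finset β} {f : β → L.BoundedFormula α n} {v : α → M} {v' : Fin n → M} :
    (finsetIInf s f).Realize v v' ↔ ∀ b ∈ s, (f b).Realize v v' := by
  rw [finsetIInf, BoundedFormula.realize_iInf]
  exact ⟨fun h b hb => h ⟨b, hb⟩, fun h b => h b.1 b.2⟩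

lemma realize_finsetISup {L : FirstOrder.Language} {M : Type*} [L.Structure M] {α β : Type*}
    {n : ℕ} {s : Finset β} {f : β → L.BoundedFormula α n} {v : α → M} {v' : Fin n → M} :
    (finsetISup s f).Realize v v' ↔ ∃ b ∈ s, (f b).Realize v v' := by
  rw [finsetISup, BoundedFormula.realize_iSup]
  exact ⟨fun ⟨b, hb⟩ => ⟨b.1, b.2, hb⟩, fun ⟨b, hb, h⟩ => ⟨⟨b, hb⟩, h⟩⟩

end FinsetConn

section Helpers
open scoped Pointwise
open Filter Topology

variable {G : Type*} [Group G]

/-- The Følner condition. -/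
def FolnerCond (G : Type*) [Group G] [DecidableEq G] : Prop :=
  ∀ (A : Finset G) (ε : ℝ), 0 < ε →
    ∃ V : Finset G, ((A * V).card : ℝ) < (1 + ε) * V.card

section Measure

variable (μ : Set G → ℝ) (h0 : ∀ X, 0 ≤ μ X)
  (hadd : ∀ X Y, Disjoint X Y → μ (X ∪ Y) = μ X + μ Y)

include hadd in
lemma measure_empty : μ ∅ = 0 := by
  have := hadd ∅ ∅ (by simp)
  simp at this; linarith

include hadd in
lemma measure_biUnion : ∀ {ι : Type*} [DecidableEq ι] (s : Finset ι) (S : ι → Set G),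
    (Set.PairwiseDisjoint (s : Set ι) S) → μ (⋃ i ∈ s, S i) = ∑ i ∈ s, μ (S i) := by
  intro ι _ s
  induction s using Finset.induction with
  | empty => intro S _; simpa using measure_empty μ hadd
  | insert _ _ hx ih =>
    rename_i a s
    intro S hdisj
    rw [Finset.sum_insert hx, ← ih S (hdisj.subset (by simp))]
    rw [Finset.set_biUnion_insert]
    apply hadd
    apply Set.disjoint_left.2
    intro x hxa hxs
    simp only [Set.mem_iUnion] at hxs
    obtain ⟨i, hi, hxi⟩ := hxs
    have hne : a ≠ i := by rintro rfl; exact hx hi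
    exact Set.disjoint_left.1 (hdisj (by simp) (by simp [hi]) hne) hxa hxi

include h0 hadd in
lemma measure_le_one (h1 : μ Set.univ = 1) (X : Set G) : μ X ≤ 1 := by
  have := hadd X Xᶜ disjoint_compl_right
  rw [Set.union_compl_self, h1] at this
  have := h0 Xᶜ
  linarith

end Measure

lemma amenable_folner [DecidableEq G] (h : Amenable G) : FolnerCond G := by
  by_contra hF
  unfold FolnerCond at hF
  push_neg at hF
  obtain ⟨A₀, ε, hε, hA₀⟩ := hF
  obtain ⟨μ, h0, h1, hadd, hinv⟩ := h
  -- replace A₀ by A := insert 1 A₀, still failing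
  set A : Finset G := insert 1 A₀ with hA
  have hfail : ∀ V : Finset G, (1 + ε) * V.card ≤ ((A * V).card : ℝ) := by
    intro V
    calc (1+ε) * V.card ≤ ((A₀ * V).card : ℝ) := hA₀ V
    _ ≤ ((A * V).card : ℝ) := by
        exact_mod_cast Finset.card_le_card (Finset.mul_subset_mul_right (by simp [hA]))
  -- iterate
  have hiter : ∀ (m : ℕ) (V : Finset G), ((1+ε)^m) * V.card ≤ ((A^m * V).card : ℝ) := by
    intro m
    induction m with
    | zero => intro V; simp
    | succ m ih =>
      intro V
      have h2 := hfail (A^m * V)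
      calc (1+ε)^(m+1) * V.card = (1+ε) * ((1+ε)^m * V.card) := by ring
      _ ≤ (1+ε) * ((A^m * V).card : ℝ) := by
          apply mul_le_mul_of_nonneg_left (ih V) (by linarith)
      _ ≤ ((A * (A^m * V)).card : ℝ) := hfail _
      _ = ((A^(m+1) * V).card : ℝ) := by rw [pow_succ', mul_assoc]
  obtain ⟨m, hm⟩ := pow_unbounded_of_one_lt (2:ℝ) (by linarith : (1:ℝ) < 1 + ε)
  set B : Finset G := A ^ m with hB
  have hdouble : ∀ V : Finset G, 2 * V.card ≤ (B * V).card := by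
    intro V
    have := hiter m V
    have : (2:ℝ) * V.card ≤ ((B*V).card : ℝ) := by
      nlinarith [Nat.cast_nonneg (α := ℝ) V.card, le_of_lt hm]
    exact_mod_cast this
  -- Hall's theorem
  set t : G × Fin 2 → Finset G := fun p => B.image (· * p.1) with ht
  have hall : ∀ s : Finset (G × Fin 2), s.card ≤ (s.biUnion t).card := by
    intro s
    set V : Finset G := s.image Prod.fst with hV
    have h1' : s.card ≤ 2 * V.card := by
      have : s ⊆ V ×ˢ (Finset.univ : Finset (Fin 2)) := by
        intro p hp
        simp only [Finset.mem_product, Finset.mem_univ, and_true, hV, Finset.mem_image]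
        exact ⟨p, hp, rfl⟩
      calc s.card ≤ (V ×ˢ (Finset.univ : Finset (Fin 2))).card := Finset.card_le_card this
      _ = 2 * V.card := by simp [Finset.card_product, mul_comm]
    have h2' : s.biUnion t = B * V := by
      ext x
      simp only [Finset.mem_biUnion, ht, Finset.mem_image, Finset.mem_mul, hV]
      constructor
      · rintro ⟨p, hp, b, hb, rfl⟩
        exact ⟨b, hb, p.1, ⟨p, hp, rfl⟩, rfl⟩
      · rintro ⟨b, hb, g, ⟨p, hp, rfl⟩, rfl⟩
        exact ⟨p, hp, b, hb, rfl⟩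
    rw [h2']
    exact le_trans h1' (hdouble V)
  obtain ⟨f, hfinj, hf⟩ := (Finset.all_card_le_biUnion_card_iff_exists_injective t).1 hall
  -- extract b
  have hb' : ∀ p : G × Fin 2, ∃ x ∈ B, x * p.1 = f p := by
    intro p
    have h := hf p
    rw [ht] at h
    simp only [Finset.mem_image] at h
    exact h
  choose b hbB hbf using hb'
  -- partition
  set P : Fin 2 × G → Set G := fun q => {g | b (g, q.1) = q.2} with hP
  set T : Fin 2 × G → Set G := fun q => (q.2 * ·) '' P q with hT
  set s₀ : Finset (Fin 2 × G) := (Finset.univ : Finset (Fin 2)) ×ˢ B with hs₀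
  have hTdisj : Set.PairwiseDisjoint (s₀ : Set (Fin 2 × G)) T := by
    intro q hq q' hq' hne
    apply Set.disjoint_left.2
    rintro x ⟨g, hg, rfl⟩ ⟨g', hg', he⟩
    simp only [hP, Set.mem_setOf_eq] at hg hg'
    have : f (g, q.1) = f (g', q'.1) := by
      rw [← hbf (g, q.1), ← hbf (g', q'.1), hg, hg']
      exact he.symm
    have heq := hfinj this
    apply hne
    have h1'' : g = g' := congrArg Prod.fst heq
    have h2'' : q.1 = q'.1 := congrArg Prod.snd heq
    have h3'' : q.2 = q'.2 := by rw [← hg, ← hg', h1'', h2'']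
    exact Prod.ext h2'' h3''
  have hsum : μ (⋃ q ∈ s₀, T q) = ∑ q ∈ s₀, μ (T q) := measure_biUnion μ hadd s₀ T hTdisj
  have hval : ∑ q ∈ s₀, μ (T q) = 2 := by
    have hPT : ∀ q, μ (T q) = μ (P q) := fun q => hinv q.2 (P q)
    rw [Finset.sum_congr rfl (fun q _ => hPT q), hs₀, Finset.sum_product]
    have hrow : ∀ i : Fin 2, ∑ x ∈ B, μ (P (i, x)) = 1 := by
      intro i
      have hdisj : Set.PairwiseDisjoint (B : Set G) (fun x => P (i, x)) := by
        intro x hx y hy hne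
        apply Set.disjoint_left.2
        intro g hgx hgy
        simp only [hP, Set.mem_setOf_eq] at hgx hgy
        exact hne (hgx ▸ hgy ▸ rfl)
      have hcover : (⋃ x ∈ B, P (i, x)) = Set.univ := by
        ext g
        simp only [Set.mem_iUnion, Set.mem_univ, iff_true, hP, Set.mem_setOf_eq]
        exact ⟨b (g, i), hbB (g, i), rfl⟩
      rw [← measure_biUnion μ hadd B _ hdisj, hcover, h1]
    simp [hrow]
  have hle : μ (⋃ q ∈ s₀, T q) ≤ 1 := measure_le_one μ h0 hadd h1 _
  rw [hsum, hval] at hle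
  linarith


section Count
variable [DecidableEq G]
open Classical in
/-- count of elements of V in X -/
noncomputable def cnt (X : Set G) (V : Finset G) : ℕ := (V.filter (· ∈ X)).card

lemma cnt_univ (V : Finset G) : cnt (Set.univ : Set G) V = V.card := by
  classical
  simp [cnt]

lemma cnt_union (X Y : Set G) (h : Disjoint X Y) (V : Finset G) :
    cnt (X ∪ Y) V = cnt X V + cnt Y V := by
  classical
  unfold cnt
  rw [Finset.card_filter, Finset.card_filter, Finset.card_filter, ← Finset.sum_add_distrib]
  apply Finset.sum_congr rfl
  intro x _
  by_cases hx : x ∈ X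
  · have hy : x ∉ Y := fun hy => Set.disjoint_left.1 h hx hy
    simp [hx, hy, Set.mem_union]
  · by_cases hy : x ∈ Y <;> simp [hx, hy, Set.mem_union]

/-- translate: counting g•X inside V equals counting X inside g⁻¹•V -/
lemma cnt_smul (g : G) (X : Set G) (V : Finset G) :
    cnt ((g * ·) '' X) V = cnt X (V.image (g⁻¹ * ·)) := by
  classical
  unfold cnt
  apply Finset.card_bij (fun v _ => g⁻¹ * v)
  · intro v hv
    simp only [Finset.mem_filter, Finset.mem_image] at hv ⊢
    obtain ⟨hvV, x, hxX, rfl⟩ := hv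
    refine ⟨⟨g * x, hvV, by group⟩, ?_⟩
    simpa [← mul_assoc] using hxX
  · intro v₁ h₁ v₂ h₂ he
    exact mul_left_cancel he
  · intro w hw
    simp only [Finset.mem_filter, Finset.mem_image] at hw
    obtain ⟨⟨v, hvV, rfl⟩, hwX⟩ := hw
    refine ⟨v, ?_, rfl⟩
    simp only [Finset.mem_filter]
    exact ⟨hvV, ⟨g⁻¹ * v, hwX, by group⟩⟩

lemma cnt_diff_le (X : Set G) (V W : Finset G) :
    cnt X W ≤ cnt X V + (W \ V).card := by
  classical
  unfold cnt
  calc (W.filter (· ∈ X)).card ≤ (V.filter (· ∈ X) ∪ (W \ V)).card := by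
        apply Finset.card_le_card
        intro w hw
        simp only [Finset.mem_filter, Finset.mem_union, Finset.mem_sdiff] at hw ⊢
        by_cases h : w ∈ V
        · exact Or.inl ⟨h, hw.2⟩
        · exact Or.inr ⟨hw.1, h⟩
  _ ≤ _ := Finset.card_union_le _ _

lemma cnt_le_card (X : Set G) (V : Finset G) : cnt X V ≤ V.card := by
  classical
  unfold cnt
  exact Finset.card_le_card (Finset.filter_subset _ _)

end Count

lemma folner_amenable [DecidableEq G] (hF : FolnerCond G) : Amenable G := by
  classical
  choose V hV using fun i : Finset G × ℕ =>
    hF (insert 1 i.1) (1/(i.2+1)) (by positivity)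
  have hVne : ∀ i, 0 < (V i).card := by
    intro i
    rcases Nat.eq_zero_or_pos (V i).card with h | h
    · exfalso
      have h2 := hV i
      rw [h] at h2
      simp only [Nat.cast_zero, mul_zero] at h2
      exact absurd h2 (not_lt.2 (Nat.cast_nonneg _))
    · exact h
  set A' : Finset G × ℕ → Finset G := fun i => insert 1 i.1 with hA'
  -- the normalized counting functions
  set f : Set G → (Finset G × ℕ) → ℝ :=
    fun X i => (cnt X (V i) : ℝ) / (V i).card with hf
  have hvpos : ∀ i : Finset G × ℕ, (0:ℝ) < (V i).card := fun i => by
    exact_mod_cast hVne i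
  have hf01 : ∀ (X : Set G) (i : Finset G × ℕ), f X i ∈ Set.Icc (0:ℝ) 1 := by
    intro X i
    constructor
    · positivity
    · rw [div_le_one (hvpos i)]
      exact_mod_cast cnt_le_card X (V i)
  set U : Ultrafilter (Finset G × ℕ) := Ultrafilter.of atTop with hU
  have hUle : (U : Filter (Finset G × ℕ)) ≤ atTop := Ultrafilter.of_le _
  have hlim : ∀ X : Set G, ∃ a ∈ Set.Icc (0:ℝ) 1,
      Filter.Tendsto (f X) (U : Filter (Finset G × ℕ)) (𝓝 a) := by
    intro X
    have hle : ↑(Ultrafilter.map (f X) U) ≤ 𝓟 (Set.Icc (0:ℝ) 1) :=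
      Filter.le_principal_iff.2 (Filter.mem_map.2 (Filter.univ_mem' fun i => hf01 X i))
    obtain ⟨a, haIcc, hconv⟩ := isCompact_Icc.ultrafilter_le_nhds _ hle
    exact ⟨a, haIcc, hconv⟩
  choose μ hμIcc hμlim using hlim
  refine ⟨μ, fun X => (hμIcc X).1, ?_, ?_, ?_⟩
  · -- μ univ = 1
    have h1 : f Set.univ = fun _ => (1:ℝ) := by
      funext i
      rw [hf]
      simp only [cnt_univ]
      exact div_self (ne_of_gt (hvpos i))
    have := hμlim Set.univ
    rw [h1] at this
    exact tendsto_nhds_unique this tendsto_const_nhds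
  · -- additivity
    intro X Y hXY
    have h1 : f (X ∪ Y) = fun i => f X i + f Y i := by
      funext i
      rw [hf]
      simp only [cnt_union X Y hXY, Nat.cast_add]
      rw [add_div]
    have h2 : Filter.Tendsto (f (X ∪ Y)) (U : Filter _) (𝓝 (μ X + μ Y)) := by
      rw [h1]; exact (hμlim X).add (hμlim Y)
    exact tendsto_nhds_unique (hμlim (X ∪ Y)) h2
  · -- invariance
    intro g X
    have hdiff0 : Filter.Tendsto (fun i => f ((g * ·) '' X) i - f X i)
        (atTop : Filter (Finset G × ℕ)) (𝓝 0) := by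
      rw [Metric.tendsto_nhds]
      intro ε' hε'
      obtain ⟨n₀, hn₀⟩ := exists_nat_gt (2/ε')
      rw [Filter.eventually_atTop]
      refine ⟨({g}, n₀), ?_⟩
      rintro ⟨B, n⟩ hi
      obtain ⟨hgB, hn⟩ : ({g} : Finset G) ⊆ B ∧ n₀ ≤ n := hi
      have hgB' : g ∈ B := hgB (Finset.mem_singleton_self g)
      set i : Finset G × ℕ := (B, n) with hi'
      set W : Finset G := (V i).image (g⁻¹ * ·) with hW
      have hmemW : ∀ x, x ∈ W ↔ g * x ∈ V i := by
        intro x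
        simp only [hW, Finset.mem_image]
        constructor
        · rintro ⟨u, hu, rfl⟩; simpa [← mul_assoc] using hu
        · intro hx; exact ⟨g * x, hx, by group⟩
      -- V ⊆ A' * V and gV ⊆ A' * V
      have hVsub : V i ⊆ A' i * V i := by
        intro v hv
        exact Finset.mem_mul.2 ⟨1, Finset.mem_insert_self 1 _, v, hv, one_mul v⟩
      -- card (V \ W) ≤ card (A'V) - card V
      have hsd : (V i \ W).card ≤ ((A' i * V i) \ V i).card := by
        apply Finset.card_le_card_of_injOn (fun v => g * v)
        · intro v hv
          simp only [Finset.coe_sdiff, Set.mem_diff, Finset.mem_coe, Finset.mem_sdiff] at hv ⊢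
          constructor
          · exact Finset.mem_mul.2 ⟨g, Finset.mem_insert_of_mem hgB', v, hv.1, rfl⟩
          · intro hgv
            exact hv.2 ((hmemW v).2 hgv)
        · intro a _ b _ h
          exact mul_left_cancel h
      have hWVcard : (W \ V i).card = (V i \ W).card := by
        have hWcard : W.card = (V i).card :=
          Finset.card_image_of_injective _ (mul_right_injective g⁻¹)
        have h₁ := Finset.card_sdiff_add_card_inter W (V i)
        have h₂ := Finset.card_sdiff_add_card_inter (V i) W
        rw [Finset.inter_comm] at h₁
        omega
      -- real bound on D
      have hVA : (V i).card ≤ (A' i * V i).card := Finset.card_le_card hVsub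
      have hDcard : (((A' i * V i) \ V i).card : ℝ) =
          ((A' i * V i).card : ℝ) - (V i).card := by
        rw [Finset.card_sdiff_of_subset hVsub]
        exact Nat.cast_sub hVA
      have hD : (((A' i * V i) \ V i).card : ℝ) < ((V i).card : ℝ) / (n+1) := by
        rw [hDcard]
        have := hV i
        have h1n : (1 + 1/((i.2:ℝ)+1)) * (V i).card
            = (V i).card + (V i).card / ((i.2:ℝ)+1) := by ring
        rw [h1n] at this
        simpa [hi'] using by linarith
      -- cnt difference bound
      have hc1 : cnt ((g * ·) '' X) (V i) = cnt X W := cnt_smul g X (V i)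
      have hc2 : cnt X W ≤ cnt X (V i) + (W \ V i).card := cnt_diff_le X (V i) W
      have hc3 : cnt X (V i) ≤ cnt X W + (V i \ W).card := cnt_diff_le X W (V i)
      have habs : |(cnt ((g * ·) '' X) (V i) : ℝ) - cnt X (V i)|
          ≤ 2 * (((A' i * V i) \ V i).card : ℝ) := by
        rw [hc1]
        rw [abs_le]
        have hcast1 : (cnt X W : ℝ) ≤ (cnt X (V i) : ℝ) + ((W \ V i).card : ℝ) := by
          exact_mod_cast hc2
        have hcast2 : (cnt X (V i) : ℝ) ≤ (cnt X W : ℝ) + ((V i \ W).card : ℝ) := by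
          exact_mod_cast hc3
        have hc4 : ((W \ V i).card : ℝ) ≤ (((A' i * V i) \ V i).card : ℝ) := by
          rw [hWVcard]; exact_mod_cast hsd
        have hc5 : ((V i \ W).card : ℝ) ≤ (((A' i * V i) \ V i).card : ℝ) := by
          exact_mod_cast hsd
        have hpos : (0:ℝ) ≤ (((A' i * V i) \ V i).card : ℝ) := Nat.cast_nonneg _
        constructor <;> linarith
      -- final estimate
      rw [Real.dist_eq, sub_zero]
      have hexp : f ((g * ·) '' X) i - f X i
          = ((cnt ((g * ·) '' X) (V i) : ℝ) - cnt X (V i)) / (V i).card := by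
        rw [hf]; ring
      rw [hexp, abs_div, abs_of_pos (hvpos i)]
      rw [div_lt_iff₀ (hvpos i)]
      have hstep : |(cnt ((g * ·) '' X) (V i) : ℝ) - cnt X (V i)|
          < 2 / ((n:ℝ)+1) * (V i).card := by
        calc |(cnt ((g * ·) '' X) (V i) : ℝ) - cnt X (V i)|
            ≤ 2 * (((A' i * V i) \ V i).card : ℝ) := habs
        _ < 2 * (((V i).card : ℝ) / (n+1)) := by linarith [hD]
        _ = 2 / ((n:ℝ)+1) * (V i).card := by ring
      have hmono : 2 / ((n:ℝ)+1) ≤ 2 / ((n₀:ℝ)+1) := by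
        apply div_le_div_of_nonneg_left (by norm_num) (by positivity)
        exact_mod_cast Nat.succ_le_succ hn
      have hn₀' : 2 / ((n₀:ℝ)+1) < ε' := by
        rw [div_lt_iff₀ (by positivity)]
        have h2e : 2 / ε' < (n₀ : ℝ) := hn₀
        rw [div_lt_iff₀ hε'] at h2e
        nlinarith
      calc |(cnt ((g * ·) '' X) (V i) : ℝ) - cnt X (V i)|
          < 2 / ((n:ℝ)+1) * (V i).card := hstep
      _ ≤ 2 / ((n₀:ℝ)+1) * (V i).card := by
          apply mul_le_mul_of_nonneg_right hmono (le_of_lt (hvpos i))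
      _ ≤ ε' * (V i).card := by
          apply mul_le_mul_of_nonneg_right (le_of_lt hn₀') (le_of_lt (hvpos i))
    have hdiffU : Filter.Tendsto (fun i => f ((g * ·) '' X) i - f X i)
        (U : Filter (Finset G × ℕ)) (𝓝 0) := hdiff0.mono_left hUle
    have h2 : Filter.Tendsto (f ((g * ·) '' X)) (U : Filter _) (𝓝 (μ X + 0)) := by
      have := (hμlim X).add hdiffU
      simpa using this
    rw [add_zero] at h2
    exact tendsto_nhds_unique (hμlim ((g * ·) '' X)) h2


/-- saturation for tuples -/
lemma sat_tuple (hsat : AlephZeroSaturated G) :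
    ∀ (k : ℕ) (p : ℕ → GroupLang.Formula (Fin k)),
      (∀ s : Finset ℕ, ∃ a : Fin k → G, ∀ n ∈ s, (p n).Realize a) →
      ∃ a : Fin k → G, ∀ n : ℕ, (p n).Realize a := by
  intro k
  induction k with
  | zero =>
    intro p hfin
    refine ⟨finZeroElim, fun n => ?_⟩
    obtain ⟨a, ha⟩ := hfin {n}
    have : a = finZeroElim := funext fun i => i.elim0
    exact this ▸ ha n (Finset.mem_singleton_self n)
  | succ k ih =>
    intro p hfin
    -- relabel to Fin k ⊕ Fin 1
    set r : ℕ → GroupLang.Formula (Fin k ⊕ Fin 1) :=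
      fun n => (p n).relabel (fun i => finSumFinEquiv.symm i) with hr
    -- the ∃-closure formulas
    set q : ℕ → GroupLang.Formula (Fin k) :=
      fun n => Language.Formula.iExs (Fin 1)
        (finsetIInf (Finset.range (n+1)) (fun m => r m)) with hq
    have hqre : ∀ (n : ℕ) (b : Fin k → G),
        (q n).Realize b ↔ ∃ x : Fin 1 → G, ∀ m ≤ n,
          (p m).Realize (Sum.elim b x ∘ (finSumFinEquiv.symm : Fin (k+1) → Fin k ⊕ Fin 1)) := by
      intro n b
      rw [hq]
      rw [Language.Formula.realize_iExs]
      constructor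
      · rintro ⟨x, hx⟩
        refine ⟨x, fun m hm => ?_⟩
        have := hx  -- realize of iInf
        rw [Language.Formula.Realize] at hx
        rw [realize_finsetIInf] at hx
        have h2 := hx m (Finset.mem_range.2 (Nat.lt_succ_of_le hm))
        rw [hr] at h2
        have h3 : (Language.Formula.Realize (L := GroupLang) (M := G)
            ((p m).relabel (fun i => finSumFinEquiv.symm i))
            (fun a => Sum.elim b x (id a))) := h2
        rw [Language.Formula.realize_relabel] at h3
        convert h3 using 2; rfl
      · rintro ⟨x, hx⟩
        refine ⟨x, ?_⟩
        rw [Language.Formula.Realize, realize_finsetIInf]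
        intro m hm
        have h2 := hx m (Nat.lt_succ_iff.1 (Finset.mem_range.1 hm))
        show (Language.Formula.Realize (L := GroupLang) (M := G)
            ((p m).relabel (fun i => finSumFinEquiv.symm i))
            (fun a => Sum.elim b x (id a)))
        rw [Language.Formula.realize_relabel]
        convert h2 using 2; rfl
    -- q is finitely satisfiable in k variables
    have hqfin : ∀ s : Finset ℕ, ∃ b : Fin k → G, ∀ n ∈ s, (q n).Realize b := by
      intro s
      set N : ℕ := s.sup id with hN
      obtain ⟨a, ha⟩ := hfin (Finset.range (N+1))
      refine ⟨fun i => a (finSumFinEquiv (Sum.inl i)), fun n hn => ?_⟩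
      rw [hqre]
      refine ⟨fun _ => a (finSumFinEquiv (Sum.inr 0)), fun m hm => ?_⟩
      have hmN : m ∈ Finset.range (N+1) := by
        rw [Finset.mem_range]
        have : n ≤ N := Finset.le_sup (f := id) hn
        omega
      have := ha m hmN
      convert this using 1
      funext i
      rcases h : finSumFinEquiv.symm i with x | x
      · simp only [Function.comp_apply, h, Sum.elim_inl]
        congr 1
        rw [← h, Equiv.apply_symm_apply]
      · simp only [Function.comp_apply, h, Sum.elim_inr]
        have hx : x = 0 := Subsingleton.elim x 0
        rw [← hx, ← h, Equiv.apply_symm_apply]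
    obtain ⟨b, hb⟩ := ih q hqfin
    -- now use 1-variable saturation with parameters b
    have hrfin : ∀ s : Finset ℕ, ∃ g : G, ∀ n ∈ s,
        (r n).Realize (Sum.elim b fun _ => g) := by
      intro s
      set N : ℕ := s.sup id with hN
      have := (hqre N b).1 (hb N)
      obtain ⟨x, hx⟩ := this
      refine ⟨x 0, fun n hn => ?_⟩
      have hnN : n ≤ N := Finset.le_sup (f := id) hn
      have h2 := hx n hnN
      rw [hr]
      rw [Language.Formula.realize_relabel]
      have hxx : (fun _ => x 0 : Fin 1 → G) = x := funext fun i => by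
        rw [Subsingleton.elim i 0]
      rw [hxx]
      exact h2
    obtain ⟨g, hg⟩ := hsat k b r hrfin
    refine ⟨Sum.elim b (fun _ => g) ∘ (finSumFinEquiv.symm : Fin (k+1) → Fin k ⊕ Fin 1),
      fun n => ?_⟩
    have := hg n
    rw [hr, Language.Formula.realize_relabel] at this
    exact this

namespace PhiDef
open FirstOrder.Language

/-- multiplication term -/
def mulT {α : Type*} (s t : GroupLang.Term α) : GroupLang.Term α :=
  Term.func (L := GroupLang) (l := 2) (Unit.unit : GroupLang.Functions 2) ![s, t]

@[simp] lemma realize_mulT {α : Type*} (v : α → G) (s t : GroupLang.Term α) :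
    (mulT s t).realize v = s.realize v * t.realize v := by
  simp only [mulT, Term.realize_func]
  rfl

/-- inner formula: v's distinct, and every c_i * v_{i'} is some w_t -/
noncomputable def inner (k j l : ℕ) : GroupLang.Formula (Fin k ⊕ (Fin j ⊕ Fin l)) :=
  (finsetIInf ((Finset.univ : Finset (Fin j × Fin j)).filter fun q => q.1 ≠ q.2)
    fun q => (Term.equal (L := GroupLang) (Term.var (Sum.inr (Sum.inl q.1)))
      (Term.var (Sum.inr (Sum.inl q.2)))).not) ⊓
  (finsetIInf (Finset.univ : Finset (Fin k × Fin j)) fun q =>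
    finsetISup (Finset.univ : Finset (Fin l)) fun t =>
      Term.equal (L := GroupLang)
        (mulT (Term.var (Sum.inl q.1)) (Term.var (Sum.inr (Sum.inl q.2))))
        (Term.var (Sum.inr (Sum.inr t))))

/-- the formula: exists an injective j-tuple v and an l-tuple w with A·V ⊆ W -/
noncomputable def phi (k j l : ℕ) : GroupLang.Formula (Fin k) :=
  Formula.iExs (Fin j ⊕ Fin l) (inner k j l)

lemma realize_phi (k j l : ℕ) (c : Fin k → G) :
    (phi k j l).Realize c ↔ ∃ v : Fin j → G, Function.Injective v ∧ ∃ w : Fin l → G,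
      ∀ (i : Fin k) (i' : Fin j), ∃ t : Fin l, c i * v i' = w t := by
  rw [phi, Formula.realize_iExs]
  constructor
  · rintro ⟨x, hx⟩
    rw [inner] at hx
    rw [Formula.realize_inf] at hx
    obtain ⟨h1, h2⟩ := hx
    rw [Formula.Realize, realize_finsetIInf] at h1 h2
    refine ⟨fun i' => x (Sum.inl i'), ?_, fun t => x (Sum.inr t), ?_⟩
    · intro a b hab
      by_contra hne
      have h3 : Formula.Realize (L := GroupLang) (M := G)
          ((Term.equal (L := GroupLang) (Term.var (Sum.inr (Sum.inl a)))
            (Term.var (Sum.inr (Sum.inl b)))).not) (fun a => Sum.elim c x (id a)) :=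
        h1 (a, b) (by simp [hne])
      rw [Formula.realize_not, Formula.realize_equal] at h3
      apply h3
      simpa using hab
    · intro i i'
      have h3 : Formula.Realize (L := GroupLang) (M := G)
          (finsetISup (Finset.univ : Finset (Fin l)) fun t =>
            Term.equal (L := GroupLang)
              (mulT (Term.var (Sum.inl i)) (Term.var (Sum.inr (Sum.inl i'))))
              (Term.var (Sum.inr (Sum.inr t)))) (fun a => Sum.elim c x (id a)) :=
        h2 (i, i') (Finset.mem_univ _)
      rw [Formula.Realize, realize_finsetISup] at h3
      obtain ⟨t, _, ht⟩ := h3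
      have ht' : Formula.Realize (L := GroupLang) (M := G)
          (Term.equal (L := GroupLang)
            (mulT (Term.var (Sum.inl i)) (Term.var (Sum.inr (Sum.inl i'))))
            (Term.var (Sum.inr (Sum.inr t)))) (fun a => Sum.elim c x (id a)) := ht
      rw [Formula.realize_equal] at ht'
      refine ⟨t, ?_⟩
      simpa using ht'
  · rintro ⟨v, hvinj, w, hw⟩
    refine ⟨Sum.elim v w, ?_⟩
    rw [inner, Formula.realize_inf]
    constructor
    · rw [Formula.Realize, realize_finsetIInf]
      rintro ⟨a, b⟩ hab
      simp only [Finset.mem_filter, Finset.mem_univ, true_and] at hab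
      show Formula.Realize (L := GroupLang) (M := G)
          ((Term.equal (L := GroupLang) (Term.var (Sum.inr (Sum.inl a)))
            (Term.var (Sum.inr (Sum.inl b)))).not) (fun a => Sum.elim c (Sum.elim v w) (id a))
      rw [Formula.realize_not, Formula.realize_equal]
      intro h
      apply hab
      apply hvinj
      simpa using h
    · rw [Formula.Realize, realize_finsetIInf]
      rintro ⟨i, i'⟩ _
      rw [realize_finsetISup]
      obtain ⟨t, ht⟩ := hw i i'
      refine ⟨t, Finset.mem_univ _, ?_⟩
      show Formula.Realize (L := GroupLang) (M := G)
          (Term.equal (L := GroupLang)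
            (mulT (Term.var (Sum.inl i)) (Term.var (Sum.inr (Sum.inl i'))))
            (Term.var (Sum.inr (Sum.inr t)))) (fun a => Sum.elim c (Sum.elim v w) (id a))
      rw [Formula.realize_equal]
      simpa using ht

end PhiDef

namespace PhiDef
open FirstOrder.Language

variable [DecidableEq G]

lemma phi_to_folner {k j l : ℕ} {c : Fin k → G}
    (h : (phi k j l).Realize c) :
    ∃ V : Finset G, V.card = j ∧ ((Finset.image c Finset.univ) * V).card ≤ l := by
  rw [realize_phi] at h
  obtain ⟨v, hvinj, w, hw⟩ := h
  refine ⟨Finset.image v Finset.univ, ?_, ?_⟩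
  · rw [Finset.card_image_of_injective _ hvinj, Finset.card_univ, Fintype.card_fin]
  · have hsub : (Finset.image c Finset.univ) * (Finset.image v Finset.univ)
        ⊆ Finset.image w Finset.univ := by
      intro x hx
      rw [Finset.mem_mul] at hx
      obtain ⟨a, ha, b, hb, rfl⟩ := hx
      simp only [Finset.mem_image, Finset.mem_univ, true_and] at ha hb ⊢
      obtain ⟨i, rfl⟩ := ha
      obtain ⟨i', rfl⟩ := hb
      obtain ⟨t, ht⟩ := hw i i'
      exact ⟨t, ht.symm⟩
    calc ((Finset.image c Finset.univ) * (Finset.image v Finset.univ)).card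
        ≤ (Finset.image w Finset.univ).card := Finset.card_le_card hsub
    _ ≤ l := le_trans Finset.card_image_le (by simp)

lemma folner_to_phi {k j l : ℕ} {c : Fin k → G} {V : Finset G}
    (hVcard : V.card = j) (hAV : ((Finset.image c Finset.univ) * V).card ≤ l) :
    (phi k j l).Realize c := by
  rw [realize_phi]
  set AV : Finset G := (Finset.image c Finset.univ) * V with hAVdef
  refine ⟨fun i => (V.equivFin.symm (Fin.cast hVcard.symm i) : G), ?_,
    fun t => if h : (t : ℕ) < AV.card then (AV.equivFin.symm ⟨t, h⟩ : G) else 1, ?_⟩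
  · intro a b hab
    have := Subtype.coe_injective hab
    have := V.equivFin.symm.injective this
    exact Fin.cast_injective _ this
  · intro i i'
    have hx : c i * (V.equivFin.symm (Fin.cast hVcard.symm i') : G) ∈ AV := by
      rw [hAVdef, Finset.mem_mul]
      exact ⟨c i, Finset.mem_image.2 ⟨i, Finset.mem_univ i, rfl⟩,
        _, (V.equivFin.symm (Fin.cast hVcard.symm i')).2, rfl⟩
    set x : ↥AV := ⟨_, hx⟩ with hxdef
    set t0 : Fin AV.card := AV.equivFin x with ht0
    refine ⟨⟨t0, lt_of_lt_of_le t0.2 hAV⟩, ?_⟩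
    have hlt : ((⟨(t0 : ℕ), lt_of_lt_of_le t0.2 hAV⟩ : Fin l) : ℕ) < AV.card := t0.2
    show c i * (V.equivFin.symm (Fin.cast hVcard.symm i') : G)
      = if h : ((⟨(t0 : ℕ), lt_of_lt_of_le t0.2 hAV⟩ : Fin l) : ℕ) < AV.card
        then (AV.equivFin.symm ⟨_, h⟩ : G) else 1
    rw [dif_pos hlt]
    have h2 : (⟨((⟨(t0 : ℕ), lt_of_lt_of_le t0.2 hAV⟩ : Fin l) : ℕ), hlt⟩ : Fin AV.card) = t0 := by
      ext; rfl
    rw [h2, ht0, Equiv.symm_apply_apply]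

end PhiDef

open PhiDef FirstOrder.Language in
lemma key_bound [DecidableEq G] (hsat : AlephZeroSaturated G) (hF : FolnerCond G) (n k : ℕ) :
    ∃ N : ℕ, ∀ A : Finset G, A.card = k →
      ∃ V : Finset G, V.card ≤ N ∧ (n+1) * (A*V).card < (n+2) * V.card := by
  by_contra hcon
  push_neg at hcon
  set D : ℕ → Finset (ℕ × ℕ) := fun N =>
    (Finset.range (N+1) ×ˢ Finset.range (k*N+1)).filter fun q => (n+1)*q.2 < (n+2)*q.1 with hD
  set p : ℕ → GroupLang.Formula (Fin k) :=
    fun N => (finsetISup (D N) fun q => phi k q.1 q.2).not with hp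
  have hpre : ∀ (N : ℕ) (c : Fin k → G), (p N).Realize c ↔
      ¬ ∃ q ∈ D N, (phi k q.1 q.2).Realize c := by
    intro N c
    rw [hp]
    rw [Formula.realize_not]
    exact not_congr (by rw [Formula.Realize, realize_finsetISup]; exact Iff.rfl)
  -- (a) realized p N means no small Følner set
  have hgood : ∀ (N : ℕ) (c : Fin k → G), (p N).Realize c → ∀ V : Finset G, V.card ≤ N →
      ¬ ((n+1) * ((Finset.image c Finset.univ)*V).card < (n+2) * V.card) := by
    intro N c hc V hVN hlt
    apply (hpre N c).1 hc
    refine ⟨(V.card, ((Finset.image c Finset.univ)*V).card), ?_, folner_to_phi rfl le_rfl⟩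
    rw [hD]
    simp only [Finset.mem_filter, Finset.mem_product, Finset.mem_range]
    refine ⟨⟨by omega, ?_⟩, hlt⟩
    have h1 : ((Finset.image c Finset.univ)*V).card ≤ (Finset.image c Finset.univ).card * V.card :=
      Finset.card_mul_le
    have h2 : (Finset.image c Finset.univ).card ≤ k := by
      calc (Finset.image c Finset.univ).card ≤ (Finset.univ : Finset (Fin k)).card :=
        Finset.card_image_le
      _ = k := by simp
    have := Nat.mul_le_mul h2 hVN
    omega
  -- (b) witnesses
  have hwit : ∀ N : ℕ, ∃ c : Fin k → G, (p N).Realize c := by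
    intro N
    obtain ⟨A, hAcard, hA⟩ := hcon N
    set c : Fin k → G := fun i => (A.equivFin.symm (Fin.cast hAcard.symm i) : G) with hc
    have himg : Finset.image c Finset.univ = A := by
      ext x
      simp only [Finset.mem_image, Finset.mem_univ, true_and]
      constructor
      · rintro ⟨i, rfl⟩
        exact (A.equivFin.symm (Fin.cast hAcard.symm i)).2
      · intro hx
        refine ⟨Fin.cast hAcard (A.equivFin ⟨x, hx⟩), ?_⟩
        have hcast : Fin.cast hAcard.symm (Fin.cast hAcard (A.equivFin ⟨x, hx⟩))
            = A.equivFin ⟨x, hx⟩ := Fin.ext rfl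
        rw [hc]
        show (A.equivFin.symm (Fin.cast hAcard.symm (Fin.cast hAcard (A.equivFin ⟨x, hx⟩))) : G) = x
        rw [hcast, Equiv.symm_apply_apply]
    refine ⟨c, ?_⟩
    rw [hpre]
    rintro ⟨q, hq, hphi⟩
    obtain ⟨V, hVcard, hAV⟩ := phi_to_folner hphi
    rw [himg] at hAV
    rw [hD] at hq
    simp only [Finset.mem_filter, Finset.mem_product, Finset.mem_range] at hq
    obtain ⟨⟨hq1, _⟩, hq3⟩ := hq
    have hVN : V.card ≤ N := by omega
    have h5 := hA V hVN
    have h6 : (n+1) * (A*V).card ≤ (n+1) * q.2 := Nat.mul_le_mul_left _ hAV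
    rw [← hVcard] at hq3
    have h7 : (n+1) * (A*V).card < (n+2) * V.card := lt_of_le_of_lt h6 hq3
    omega
  -- (c) monotonicity
  have hmono : ∀ (m N : ℕ), m ≤ N → ∀ c : Fin k → G, (p N).Realize c → (p m).Realize c := by
    intro m N hmN c hc
    rw [hpre] at hc ⊢
    rintro ⟨q, hq, hphi⟩
    apply hc
    refine ⟨q, ?_, hphi⟩
    rw [hD] at hq ⊢
    simp only [Finset.mem_filter, Finset.mem_product, Finset.mem_range] at hq ⊢
    have := Nat.mul_le_mul_left k hmN
    omega
  -- (d) finite satisfiability and saturation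
  have hfin : ∀ s : Finset ℕ, ∃ c : Fin k → G, ∀ N ∈ s, (p N).Realize c := by
    intro s
    obtain ⟨c, hc⟩ := hwit (s.sup id)
    exact ⟨c, fun N hN => hmono N (s.sup id) (Finset.le_sup (f := id) hN) c hc⟩
  obtain ⟨c, hc⟩ := sat_tuple hsat k p hfin
  -- (e) contradiction with the Følner condition
  set A : Finset G := Finset.image c Finset.univ with hA
  obtain ⟨V, hV⟩ := hF A (1/(n+1)) (by positivity)
  have hnat : (n+1) * (A*V).card < (n+2) * V.card := by
    have hmul : ((n:ℝ)+1) * ((A*V).card : ℝ) < ((n:ℝ)+2) * V.card := by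
      have h2 : ((n:ℝ)+1) * ((A*V).card : ℝ) < ((n:ℝ)+1) * ((1 + 1/((n:ℝ)+1)) * V.card) := by
        apply mul_lt_mul_of_pos_left hV (by positivity)
      have hs : ((n:ℝ)+1) * (1 + 1/((n:ℝ)+1)) = (n:ℝ)+2 := by
        have hne : ((n:ℝ)+1) ≠ 0 := by positivity
        field_simp
        ring
      have h3 : ((n:ℝ)+1) * ((1 + 1/((n:ℝ)+1)) * V.card) = ((n:ℝ)+2) * V.card := by
        rw [← mul_assoc, hs]
      linarith
    exact_mod_cast hmul
  exact hgood V.card c (hc V.card) V le_rfl hnat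

end Helpers

open scoped Pointwise

/-- An ℵ₀-saturated group is amenable if and only if it is uniformly amenable. -/
theorem aleph0_saturated_amenable_iff_uniformly_amenable (G : Type*) [Group G]
    (hsat : AlephZeroSaturated G) : Amenable G ↔ UniformlyAmenable G := by
  classical
  constructor
  · -- Amenable → UniformlyAmenable
    intro hAm
    have hF : FolnerCond G := amenable_folner hAm
    choose Nf hNf using fun n k => key_bound hsat hF n k
    refine ⟨fun ε k => Nf ⌈1/ε⌉₊ k, ?_⟩
    intro A ε hε hε1
    set n : ℕ := ⌈1/ε⌉₊ with hn
    obtain ⟨V, hVN, hVlt⟩ := hNf n A.card A rfl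
    refine ⟨V, hVN, ?_⟩
    rw [← Finset.coe_mul, Set.ncard_coe_finset]
    -- convert the integer inequality to the real one
    have hcast : ((n:ℝ)+1) * ((A*V).card : ℝ) < ((n:ℝ)+2) * (V.card : ℝ) := by
      exact_mod_cast hVlt
    have hnpos : (0:ℝ) < (n:ℝ)+1 := by positivity
    have h1 : ((A*V).card : ℝ) < (1 + 1/((n:ℝ)+1)) * V.card := by
      have hs0 : (1 + 1/((n:ℝ)+1)) = ((n:ℝ)+2)/((n:ℝ)+1) := by
        rw [eq_div_iff (ne_of_gt hnpos)]
        field_simp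
        ring
      have hs : (1 + 1/((n:ℝ)+1)) * (V.card:ℝ) = (((n:ℝ)+2) * V.card) / ((n:ℝ)+1) := by
        rw [hs0, div_mul_eq_mul_div]
      rw [hs, lt_div_iff₀ hnpos]
      nlinarith [hcast]
    have h2 : 1/((n:ℝ)+1) ≤ ε := by
      have hceil : 1/ε ≤ (n:ℝ) := by
        rw [hn]
        exact Nat.le_ceil _
      rw [div_le_iff₀ (by positivity)]
      have : 1 ≤ ε * (n:ℝ) := by
        rw [one_div] at hceil
        calc (1:ℝ) = ε * ε⁻¹ := (mul_inv_cancel₀ (ne_of_gt hε)).symm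
        _ ≤ ε * (n:ℝ) := by apply mul_le_mul_of_nonneg_left hceil (le_of_lt hε)
      nlinarith
    calc ((A*V).card : ℝ) < (1 + 1/((n:ℝ)+1)) * V.card := h1
    _ ≤ (1 + ε) * V.card := by
        apply mul_le_mul_of_nonneg_right (by linarith) (Nat.cast_nonneg _)
  · -- UniformlyAmenable → Amenable
    intro hUA
    apply folner_amenable
    intro A ε hε
    obtain ⟨α, hα⟩ := hUA
    rcases le_or_gt ε 1 with hε1 | hε1
    · obtain ⟨V, _, hV⟩ := hα A ε hε hε1
      refine ⟨V, ?_⟩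
      rwa [← Finset.coe_mul, Set.ncard_coe_finset] at hV
    · obtain ⟨V, _, hV⟩ := hα A 1 one_pos le_rfl
      rw [← Finset.coe_mul, Set.ncard_coe_finset] at hV
      refine ⟨V, lt_of_lt_of_le hV ?_⟩
      apply mul_le_mul_of_nonneg_right (by linarith) (Nat.cast_nonneg _)
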